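/- The adversarial distance is lower bounded by the radial distance: d(x₁, x₂) ≥ (|x₁| − |x₂|)² / (4L) for all x₁, x₂ ∈ ℂ. -/

import Mathlib

/-- Energy (effort) of a control on `[0, L]`. -/
noncomputable def energy (L : ℝ) (n : ℝ → ℂ) : ℝ := ∫ z in (0:ℝ)..L, ‖n z‖^2

/-- The per-sample channel ODE: `q' = iγ|q|²q + n` on `[0, L]`. -/
def IsSol (γ L : ℝ) (n q : ℝ → ℂ) : Prop :=
  ∀ z ∈ Set.Icc (0:ℝ) L,
    HasDerivAt q (Complex.I * (γ:ℂ) * ((‖q z‖:ℂ))^2 * q z + n z) z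

/-- The noise ball `B_E(x)`: outputs reachable from input `x` with effort at most `E`. -/
def noiseBall (γ L : ℝ) (x : ℂ) (E : ℝ) : Set ℂ :=
  {y | ∃ n q : ℝ → ℂ, ContinuousOn n (Set.Icc 0 L) ∧ IsSol γ L n q ∧
    q 0 = x ∧ q L = y ∧ energy L n ≤ E}

/-- The adversarial distance between two input points. -/
noncomputable def adist (γ L : ℝ) (x₁ x₂ : ℂ) : ℝ :=
  sInf {E | 0 ≤ E ∧ (noiseBall γ L x₁ E ∩ noiseBall γ L x₂ E).Nonempty}

open intervalIntegral MeasureTheory Set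

lemma re_conj_mul (γ : ℝ) (w d : ℂ) :
    ((starRingEnd ℂ w) * (Complex.I * (γ:ℂ) * ((‖w‖:ℂ))^2 * w + d)).re
      = ((starRingEnd ℂ w) * d).re := by
  simp [Complex.mul_re, Complex.mul_im, Complex.ext_iff, ← Complex.ofReal_pow]
  ring

lemma hasDerivAt_normSq_comp {q : ℝ → ℂ} {d : ℂ} {z : ℝ} (h : HasDerivAt q d z) :
    HasDerivAt (fun t => Complex.normSq (q t)) (2 * ((starRingEnd ℂ (q z)) * d).re) z := by
  have hre : HasDerivAt (fun t => (q t).re) d.re z :=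
    Complex.reCLM.hasFDerivAt.comp_hasDerivAt z h
  have him : HasDerivAt (fun t => (q t).im) d.im z :=
    Complex.imCLM.hasFDerivAt.comp_hasDerivAt z h
  have h2 : (fun t => Complex.normSq (q t))
      = fun t => (q t).re * (q t).re + (q t).im * (q t).im := by
    funext t; exact Complex.normSq_apply _
  rw [h2]
  exact ((hre.mul hre).add (him.mul him)).congr_deriv
    (by simp only [Complex.mul_re, Complex.conj_re, Complex.conj_im]; ring)

lemma norm_end_bound (γ L : ℝ) (hL : 0 < L) (n q : ℝ → ℂ)
    (hn : ContinuousOn n (Set.Icc 0 L)) (hq : IsSol γ L n q) :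
    |‖q L‖ - ‖q 0‖| ≤ ∫ z in (0:ℝ)..L, ‖n z‖ := by
  have huIcc : Set.uIcc (0:ℝ) L = Set.Icc 0 L := Set.uIcc_of_le hL.le
  have hqc : ContinuousOn q (Set.Icc 0 L) := fun z hz =>
    ((hq z hz).continuousAt).continuousWithinAt
  set f : ℝ → ℝ := fun z => Complex.normSq (q z) with hfdef
  set F : ℝ → ℝ := fun z => 2 * ((starRingEnd ℂ (q z)) * n z).re with hFdef
  have hf : ∀ z ∈ Set.Icc (0:ℝ) L, HasDerivAt f (F z) z := by
    intro z hz
    have := hasDerivAt_normSq_comp (hq z hz)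
    rwa [re_conj_mul] at this
  have hFc : ContinuousOn F (Set.Icc 0 L) := by
    apply continuousOn_const.mul
    exact Complex.continuous_re.comp_continuousOn
      ((continuous_star.comp_continuousOn hqc).mul hn)
  have hfc : ContinuousOn f (Set.Icc 0 L) :=
    Complex.continuous_normSq.comp_continuousOn hqc
  have hfnonneg : ∀ z, 0 ≤ f z := fun z => Complex.normSq_nonneg _
  have hnnc : ContinuousOn (fun z => ‖n z‖) (Set.Icc 0 L) := hn.norm
  have hnint : IntervalIntegrable (fun z => ‖n z‖) volume 0 L :=
    (huIcc ▸ hnnc).intervalIntegrable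
  have key : ∀ ε : ℝ, 0 < ε →
      |Real.sqrt (f L + ε) - Real.sqrt (f 0 + ε)| ≤ ∫ z in (0:ℝ)..L, ‖n z‖ := by
    intro ε hε
    set g : ℝ → ℝ := fun z => Real.sqrt (f z + ε) with hgdef
    set G : ℝ → ℝ := fun z => F z / (2 * Real.sqrt (f z + ε)) with hGdef
    have hpos : ∀ z, 0 < f z + ε := fun z => by have := hfnonneg z; linarith
    have hg : ∀ z ∈ Set.Icc (0:ℝ) L, HasDerivAt g (G z) z := by
      intro z hz
      have h1 : HasDerivAt (fun t => f t + ε) (F z) z := (hf z hz).add_const ε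
      have := (Real.hasDerivAt_sqrt (hpos z).ne').comp z h1
      exact this.congr_deriv (by simp only [hGdef]; ring)
    have hGc : ContinuousOn G (Set.Icc 0 L) := by
      apply hFc.div
      · exact continuousOn_const.mul ((hfc.add continuousOn_const).sqrt)
      · intro z _
        have := Real.sqrt_pos.mpr (hpos z); positivity
    have hGint : IntervalIntegrable G volume 0 L := (huIcc ▸ hGc).intervalIntegrable
    have hftc : ∫ z in (0:ℝ)..L, G z = g L - g 0 :=
      integral_eq_sub_of_hasDerivAt (fun z hz => hg z (huIcc ▸ hz)) hGint
    have hbound : ∀ z ∈ Set.Icc (0:ℝ) L, |G z| ≤ ‖n z‖ := by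
      intro z hz
      have hd : 0 < 2 * Real.sqrt (f z + ε) := by
        have := Real.sqrt_pos.mpr (hpos z); linarith
      rw [hGdef, abs_div, abs_of_pos hd, div_le_iff₀ hd]
      have h1 : |F z| ≤ 2 * (‖q z‖ * ‖n z‖) := by
        rw [hFdef]
        have := Complex.abs_re_le_norm ((starRingEnd ℂ (q z)) * n z)
        calc |2 * ((starRingEnd ℂ (q z)) * n z).re|
            = 2 * |((starRingEnd ℂ (q z)) * n z).re| := by rw [abs_mul]; norm_num
          _ ≤ 2 * ‖(starRingEnd ℂ (q z)) * n z‖ := by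
              apply mul_le_mul_of_nonneg_left _ (by norm_num)
              simpa using this
          _ = 2 * (‖q z‖ * ‖n z‖) := by rw [norm_mul, RCLike.norm_conj]
      have h2 : ‖q z‖ ≤ Real.sqrt (f z + ε) := by
        have : ‖q z‖ = Real.sqrt (f z) := by
          rw [hfdef, Complex.norm_def]
        rw [this]
        exact Real.sqrt_le_sqrt (by linarith)
      calc |F z| ≤ 2 * (‖q z‖ * ‖n z‖) := h1
        _ ≤ 2 * (Real.sqrt (f z + ε) * ‖n z‖) := by
            apply mul_le_mul_of_nonneg_left _ (by norm_num)
            exact mul_le_mul_of_nonneg_right h2 (norm_nonneg _)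
        _ = ‖n z‖ * (2 * Real.sqrt (f z + ε)) := by ring
    calc |g L - g 0| = |∫ z in (0:ℝ)..L, G z| := by rw [hftc]
      _ ≤ ∫ z in (0:ℝ)..L, |G z| := intervalIntegral.abs_integral_le_integral_abs hL.le
      _ ≤ ∫ z in (0:ℝ)..L, ‖n z‖ := by
          apply intervalIntegral.integral_mono_on hL.le hGint.abs hnint hbound
  have hlim : Filter.Tendsto (fun ε : ℝ => |Real.sqrt (f L + ε) - Real.sqrt (f 0 + ε)|)
      (nhdsWithin 0 (Set.Ioi 0)) (nhds |Real.sqrt (f L) - Real.sqrt (f 0)|) := by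
    have hcont : Continuous (fun ε : ℝ => |Real.sqrt (f L + ε) - Real.sqrt (f 0 + ε)|) := by
      continuity
    have := hcont.tendsto 0
    simpa using this.mono_left nhdsWithin_le_nhds
  have hfinal : |Real.sqrt (f L) - Real.sqrt (f 0)| ≤ ∫ z in (0:ℝ)..L, ‖n z‖ := by
    apply le_of_tendsto hlim
    filter_upwards [self_mem_nhdsWithin] with ε hε
    exact key ε hε
  have e1 : Real.sqrt (f L) = ‖q L‖ := by
    rw [hfdef, Complex.norm_def]
  have e2 : Real.sqrt (f 0) = ‖q 0‖ := by
    rw [hfdef, Complex.norm_def]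
  rwa [e1, e2] at hfinal

lemma cs_bound (L : ℝ) (hL : 0 < L) (n : ℝ → ℂ) (hn : ContinuousOn n (Set.Icc 0 L)) :
    (∫ z in (0:ℝ)..L, ‖n z‖)^2 ≤ L * energy L n := by
  have huIcc : Set.uIcc (0:ℝ) L = Set.Icc 0 L := Set.uIcc_of_le hL.le
  have h1 : IntervalIntegrable (fun z => ‖n z‖) volume 0 L :=
    (huIcc ▸ hn.norm).intervalIntegrable
  have h2 : IntervalIntegrable (fun z => ‖n z‖^2) volume 0 L :=
    (huIcc ▸ (hn.norm.pow 2)).intervalIntegrable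
  set A := ∫ z in (0:ℝ)..L, ‖n z‖ with hA
  set c := A / L with hc
  have expand : (fun z => (‖n z‖ - c)^2) = fun z => (‖n z‖^2 - (2*c)*‖n z‖) + c^2 := by
    funext z; ring
  have key : 0 ≤ ∫ z in (0:ℝ)..L, (‖n z‖ - c)^2 :=
    intervalIntegral.integral_nonneg hL.le (fun z _ => sq_nonneg _)
  rw [expand] at key
  rw [intervalIntegral.integral_add (h2.sub (h1.const_mul (2*c))) intervalIntegrable_const,
    intervalIntegral.integral_sub h2 (h1.const_mul (2*c)),
    intervalIntegral.integral_const_mul, intervalIntegral.integral_const] at key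
  have hE : energy L n = ∫ z in (0:ℝ)..L, ‖n z‖^2 := rfl
  rw [← hA, smul_eq_mul] at key
  have hthis : 0 ≤ energy L n - 2*c*A + (L-0)*c^2 := by rw [hE]; linarith
  rw [hc] at hthis
  have hL' : L ≠ 0 := hL.ne'
  have h4 : A^2 / L ≤ energy L n := by
    have e1 : 2*(A/L)*A = 2*(A^2/L) := by field_simp
    have e2 : (L-0)*(A/L)^2 = A^2/L := by field_simp; ring
    linarith [hthis, e1, e2]
  calc A^2 = (A^2/L) * L := by field_simp
    _ ≤ energy L n * L := mul_le_mul_of_nonneg_right h4 hL.le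
    _ = L * energy L n := mul_comm _ _

lemma reach_zero (γ L : ℝ) (hL : 0 < L) (x : ℂ) :
    ∃ E : ℝ, 0 ≤ E ∧ (0:ℂ) ∈ noiseBall γ L x E := by
  set q : ℝ → ℂ := fun z => x - (z:ℂ) * (x / (L:ℂ)) with hq
  set n : ℝ → ℂ := fun z => -(x / (L:ℂ)) - Complex.I * (γ:ℂ) * ((‖q z‖:ℂ))^2 * q z with hn
  have hqd : ∀ z : ℝ, HasDerivAt q (-(x / (L:ℂ))) z := by
    intro z
    have h1 : HasDerivAt (fun t : ℝ => (t:ℂ)) 1 z := by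
      simpa using (hasDerivAt_id z).ofReal_comp
    have h2 : HasDerivAt (fun t : ℝ => (t:ℂ) * (x / (L:ℂ))) (x / (L:ℂ)) z := by
      simpa using h1.mul_const (x / (L:ℂ))
    exact ((hasDerivAt_const z x).sub h2).congr_deriv (by ring)
  have hqc : Continuous q := by
    apply continuous_const.sub (Complex.continuous_ofReal.mul continuous_const)
  have hnc : ContinuousOn n (Set.Icc 0 L) := by
    apply Continuous.continuousOn
    apply continuous_const.sub
    apply Continuous.mul _ hqc
    apply continuous_const.mul
    exact (Complex.continuous_ofReal.comp hqc.norm).pow 2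
  refine ⟨energy L n, ?_, n, q, hnc, ?_, ?_, ?_, le_refl _⟩
  · exact intervalIntegral.integral_nonneg hL.le (fun z _ => sq_nonneg _)
  · intro z hz
    have heq : Complex.I * (γ:ℂ) * ((‖q z‖:ℂ))^2 * q z + n z = -(x / (L:ℂ)) := by
      rw [hn]; ring
    rw [heq]; exact hqd z
  · simp [hq]
  · have hLne : (L:ℂ) ≠ 0 := by exact_mod_cast hL.ne'
    simp only [hq]; field_simp; ring

/-- The adversarial distance is lower bounded by the radial distance. -/
theorem adist_lower_bound (γ L : ℝ) (hL : 0 < L) (x₁ x₂ : ℂ) :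
    (‖x₁‖ - ‖x₂‖)^2 / (4 * L) ≤ adist γ L x₁ x₂ := by
  obtain ⟨E₁, hE₁, h₁⟩ := reach_zero γ L hL x₁
  obtain ⟨E₂, hE₂, h₂⟩ := reach_zero γ L hL x₂
  have hmono : ∀ (x : ℂ) (E E' : ℝ), E ≤ E' →
      (0:ℂ) ∈ noiseBall γ L x E → (0:ℂ) ∈ noiseBall γ L x E' := by
    rintro x E E' h ⟨n, q, a, b, c, d, e⟩
    exact ⟨n, q, a, b, c, d, e.trans h⟩
  have hne : Set.Nonempty {E | 0 ≤ E ∧ (noiseBall γ L x₁ E ∩ noiseBall γ L x₂ E).Nonempty} :=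
    ⟨max E₁ E₂, le_trans hE₁ (le_max_left _ _),
      ⟨0, hmono x₁ E₁ _ (le_max_left _ _) h₁, hmono x₂ E₂ _ (le_max_right _ _) h₂⟩⟩
  apply le_csInf hne
  rintro E ⟨hE0, y, ⟨n₁, q₁, hn₁, hs₁, h10, h1L, hE1'⟩, ⟨n₂, q₂, hn₂, hs₂, h20, h2L, hE2'⟩⟩
  have hLE : 0 ≤ L * E := mul_nonneg hL.le hE0
  have hb : ∀ (n q : ℝ → ℂ), ContinuousOn n (Set.Icc 0 L) → IsSol γ L n q →
      energy L n ≤ E → |‖q L‖ - ‖q 0‖| ≤ Real.sqrt (L * E) := by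
    intro n q hn hs hEn
    have A := norm_end_bound γ L hL n q hn hs
    have hAn : 0 ≤ ∫ z in (0:ℝ)..L, ‖n z‖ :=
      intervalIntegral.integral_nonneg hL.le (fun z _ => norm_nonneg _)
    have hsq : (∫ z in (0:ℝ)..L, ‖n z‖)^2 ≤ L * E :=
      le_trans (cs_bound L hL n hn) (mul_le_mul_of_nonneg_left hEn hL.le)
    have : ∫ z in (0:ℝ)..L, ‖n z‖ ≤ Real.sqrt (L * E) := by
      rw [← Real.sqrt_sq hAn]
      exact Real.sqrt_le_sqrt hsq
    linarith
  have b1 := hb n₁ q₁ hn₁ hs₁ hE1'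
  have b2 := hb n₂ q₂ hn₂ hs₂ hE2'
  rw [h10, h1L] at b1
  rw [h20, h2L] at b2
  have htri : |‖x₁‖ - ‖x₂‖| ≤ 2 * Real.sqrt (L * E) := by
    have t1 : |‖x₁‖ - ‖x₂‖| ≤ |‖x₁‖ - ‖y‖| + |‖y‖ - ‖x₂‖| := abs_sub_le _ _ _
    have t2 : |‖x₁‖ - ‖y‖| = |‖y‖ - ‖x₁‖| := abs_sub_comm _ _
    have t3 : |‖y‖ - ‖x₂‖| = |‖x₂‖ - ‖y‖| := abs_sub_comm _ _
    rw [t2, t3] at t1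
    linarith [b1, b2, t1]
  have hsq2 : (‖x₁‖ - ‖x₂‖)^2 ≤ 4 * (L * E) := by
    have h0 : 0 ≤ |‖x₁‖ - ‖x₂‖| := abs_nonneg _
    have hs : |‖x₁‖ - ‖x₂‖|^2 ≤ (2 * Real.sqrt (L * E))^2 := by
      nlinarith [Real.sqrt_nonneg (L * E)]
    rw [sq_abs] at hs
    have he : (2 * Real.sqrt (L * E))^2 = 4 * (L * E) := by
      rw [mul_pow, Real.sq_sqrt hLE]; norm_num
    linarith
  rw [div_le_iff₀ (by positivity)]
  linarith
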